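/- Let k̄ ∈ ℕ, C ∈ ℝ^{n_y×n}, and Φ ∈ ℝ^{n×n} invertible. For k = 0, 1, …, k̄, let ψ̃_k ∈ ℝ^{n_y} and let Ṽ_k ∈ ℝ^{n_y×n_y} be symmetric positive definite. Let Ō ∈ ℝ^{(k̄+1)n_y×n} be the vertical stacking of the matrices C Φ^{k−k̄} for k = 0, …, k̄, and assume rank(Ō) = n; let Ō† := (ŌᵀŌ)⁻¹Ōᵀ. Let ψ̄ ∈ ℝ^{(k̄+1)n_y} be the vertical stacking of the ψ̃_k, and let V̄ be the block-diagonal matrix whose k-th diagonal block is (k̄+1)·Ṽ_k. Then every ξ ∈ ℝ^n satisfying (C Φ^{k−k̄} ξ − ψ̃_k)ᵀ Ṽ_k⁻¹ (C Φ^{k−k̄} ξ − ψ̃_k) ≤ 1 for all k = 0, …, k̄ satisfies ξ ∈ E(Ō†ψ̄, Ō†V̄Ō†ᵀ), i.e., (ξ − Ō†ψ̄)ᵀ (Ō†V̄Ō†ᵀ)⁻¹ (ξ − Ō†ψ̄) ≤ 1. -/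

import Mathlib

open Matrix

/-- Auxiliary: pull a double `mulVec` through a dot product. -/
lemma dot_mv {ι κ : Type*} [Fintype ι] [Fintype κ]
    (X : Matrix ι κ ℝ) (Y : Matrix ι κ ℝ) (a b : κ → ℝ) :
    (X *ᵥ a) ⬝ᵥ (Y *ᵥ b) = a ⬝ᵥ ((Xᵀ * Y) *ᵥ b) := by
  rw [dotProduct_mulVec, vecMul_mulVec, ← dotProduct_mulVec]

/-- Cauchy–Schwarz in the `V`-weighted geometry: projecting through a matrix `A`
can only shrink the Mahalanobis norm. -/
lemma proj_mahalanobis_le {ι κ : Type*} [Fintype ι] [Fintype κ] [DecidableEq ι] [DecidableEq κ]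
    (V : Matrix ι ι ℝ) (hV : V.PosDef) (A : Matrix κ ι ℝ)
    (hM : (A * V * Aᵀ).PosDef) (e : ι → ℝ) :
    (A *ᵥ e) ⬝ᵥ ((A * V * Aᵀ)⁻¹ *ᵥ (A *ᵥ e)) ≤ e ⬝ᵥ (V⁻¹ *ᵥ e) := by
  set M := A * V * Aᵀ with hMdef
  have hMdet : IsUnit M.det := hM.det_pos.ne'.isUnit
  have hVdet : IsUnit V.det := hV.det_pos.ne'.isUnit
  set y : κ → ℝ := M⁻¹ *ᵥ (A *ᵥ e) with hy
  clear_value y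
  have hMy : M *ᵥ y = A *ᵥ e := by
    rw [hy, mulVec_mulVec, Matrix.mul_nonsing_inv _ hMdet, one_mulVec]
  obtain ⟨S, hSS⟩ : ∃ S : Matrix ι ι ℝ, Sᵀ * S = V := by
    open scoped MatrixOrder in
    obtain ⟨B, hB⟩ := CStarAlgebra.nonneg_iff_eq_star_mul_self.mp hV.posSemidef.nonneg
    exact ⟨B, by rw [hB, star_eq_conjTranspose, conjTranspose_eq_transpose_of_trivial]⟩
  set u : ι → ℝ := S *ᵥ (Aᵀ *ᵥ y) with hu
  set v : ι → ℝ := S *ᵥ (V⁻¹ *ᵥ e) with hv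
  set t : ℝ := (A *ᵥ e) ⬝ᵥ y with ht
  set c : ℝ := e ⬝ᵥ (V⁻¹ *ᵥ e) with hc
  have hVVinv : ∀ b : ι → ℝ, V *ᵥ (V⁻¹ *ᵥ b) = b := fun b => by
    rw [mulVec_mulVec, Matrix.mul_nonsing_inv _ hVdet, one_mulVec]
  have huu : u ⬝ᵥ u = t := by
    rw [hu, dot_mv, hSS, mulVec_mulVec, dot_mv, transpose_transpose, ← Matrix.mul_assoc,
      ← hMdef, hMy, ht, dotProduct_comm]
  have huv : u ⬝ᵥ v = t := by
    rw [hu, hv, dot_mv, hSS, hVVinv, dotProduct_comm, dotProduct_mulVec, vecMul_transpose,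
      ht]
  have hvv : v ⬝ᵥ v = c := by
    rw [hv, dot_mv, hSS, hVVinv, dotProduct_comm, hc]
  have ht0 : 0 ≤ t := by
    have := hM.inv.posSemidef.dotProduct_mulVec_nonneg (A *ᵥ e)
    simpa [ht, hy, star_trivial] using this
  have hc0 : 0 ≤ c := by
    have := hV.inv.posSemidef.dotProduct_mulVec_nonneg e
    simpa [hc, star_trivial] using this
  have hCS : (u ⬝ᵥ v) ^ 2 ≤ (u ⬝ᵥ u) * (v ⬝ᵥ v) := by
    simpa [dotProduct, sq] using Finset.sum_mul_sq_le_sq_mul_sq Finset.univ u v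
  rw [huu, huv, hvv] at hCS
  have htc : t ≤ c := by
    rcases eq_or_lt_of_le ht0 with h0 | h0
    · linarith
    · nlinarith
  exact htc

/-- Observer-initialization theorem (Appendix C of the paper): combining the `k̄+1`
noisy-output elliptical-cylinder constraints `CΦ^{k−k̄}ξ ∈ E(ψ̃_k, Ṽ_k)` for
`k = 0, …, k̄` yields the bounded ellipsoidal state estimate
`ξ ∈ E(Ō†ψ̄, Ō†V̄Ō†ᵀ)`, where `Ō` stacks the matrices `CΦ^{k−k̄}`, `rank(Ō) = n`,
`Ō† = (ŌᵀŌ)⁻¹Ōᵀ`, `ψ̄` stacks the `ψ̃_k`, and `V̄` is block diagonal with blocks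
`(k̄+1)·Ṽ_k`. -/
theorem observer_initialization {n ny kbar : ℕ}
    (C : Matrix (Fin ny) (Fin n) ℝ)
    (Φ : Matrix (Fin n) (Fin n) ℝ) (hΦ : IsUnit Φ.det)
    (ψ : Fin (kbar + 1) → Fin ny → ℝ)
    (Vt : Fin (kbar + 1) → Matrix (Fin ny) (Fin ny) ℝ)
    (hVt : ∀ k, (Vt k).PosDef)
    (Obar : Matrix (Fin (kbar + 1) × Fin ny) (Fin n) ℝ)
    (hObar : ∀ (k : Fin (kbar + 1)) (j : Fin ny) (i : Fin n),
      Obar (k, j) i = (C * (Φ⁻¹) ^ (kbar - (k : ℕ))) j i)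
    (hrank : Obar.rank = n)
    (ψbar : Fin (kbar + 1) × Fin ny → ℝ)
    (hψbar : ∀ k j, ψbar (k, j) = ψ k j)
    (Vbar : Matrix (Fin (kbar + 1) × Fin ny) (Fin (kbar + 1) × Fin ny) ℝ)
    (hVbar : ∀ k j k' j', Vbar (k, j) (k', j') =
      if k = k' then ((kbar : ℝ) + 1) * Vt k j j' else 0)
    (ξ : Fin n → ℝ)
    (hξ : ∀ k : Fin (kbar + 1),
      ((C * (Φ⁻¹) ^ (kbar - (k : ℕ))) *ᵥ ξ - ψ k) ⬝ᵥ
        ((Vt k)⁻¹ *ᵥ ((C * (Φ⁻¹) ^ (kbar - (k : ℕ))) *ᵥ ξ - ψ k)) ≤ 1) :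
    let Odag : Matrix (Fin n) (Fin (kbar + 1) × Fin ny) ℝ := (Obarᵀ * Obar)⁻¹ * Obarᵀ
    (ξ - Odag *ᵥ ψbar) ⬝ᵥ ((Odag * Vbar * Odagᵀ)⁻¹ *ᵥ (ξ - Odag *ᵥ ψbar)) ≤ 1 := by
  intro Odag
  have hOdagdef : Odag = (Obarᵀ * Obar)⁻¹ * Obarᵀ := rfl
  clear_value Odag
  have hkpos : (0:ℝ) < (kbar : ℝ) + 1 := by positivity
  -- injectivity of Obar as a linear map
  have hinj : Function.Injective Obar.mulVecLin := by
    rw [← LinearMap.ker_eq_bot]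
    have h1 : Module.finrank ℝ (LinearMap.range Obar.mulVecLin) = n := hrank
    have h2 := LinearMap.finrank_range_add_finrank_ker Obar.mulVecLin
    rw [h1, Module.finrank_pi, Fintype.card_fin] at h2
    have h3 : Module.finrank ℝ (LinearMap.ker Obar.mulVecLin) = 0 := by omega
    exact Submodule.finrank_eq_zero.mp h3
  -- Obarᵀ * Obar is positive definite
  have hOtO : (Obarᵀ * Obar).PosDef := by
    refine PosDef.of_dotProduct_mulVec_pos ?_ fun x hx => ?_
    · have := isHermitian_conjTranspose_mul_self Obar
      rwa [conjTranspose_eq_transpose_of_trivial] at this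
    · have hx' : Obar *ᵥ x ≠ 0 := by
        intro h
        apply hx
        have : Obar.mulVecLin x = Obar.mulVecLin 0 := by
          simpa [Matrix.mulVecLin_apply] using h
        exact hinj this
      have key : star x ⬝ᵥ ((Obarᵀ * Obar) *ᵥ x) = (Obar *ᵥ x) ⬝ᵥ (Obar *ᵥ x) := by
        rw [star_trivial, dot_mv]
      rw [key]
      rcases (dotProduct_self_eq_zero (v := Obar *ᵥ x)).not.mpr hx' with hne
      have hnn : 0 ≤ (Obar *ᵥ x) ⬝ᵥ (Obar *ᵥ x) :=
        Finset.sum_nonneg fun i _ => mul_self_nonneg _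
      exact lt_of_le_of_ne hnn (Ne.symm hne)
  have hdet : IsUnit (Obarᵀ * Obar).det := hOtO.det_pos.ne'.isUnit
  have hAO : Odag * Obar = 1 := by
    rw [hOdagdef, Matrix.mul_assoc, Matrix.nonsing_inv_mul _ hdet]
  -- Vbar is positive definite
  have hVtdet : ∀ k, IsUnit (Vt k).det := fun k => (hVt k).det_pos.ne'.isUnit
  have hVbarSymm : Vbarᵀ = Vbar := by
    ext ⟨k, j⟩ ⟨k', j'⟩
    rw [transpose_apply, hVbar, hVbar]
    rcases eq_or_ne k k' with h | h
    · subst h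
      simp only [if_pos rfl]
      have := (hVt k).1
      have h2 : Vt k j' j = Vt k j j' := by
        have := congrFun (congrFun this j) j'
        simpa [conjTranspose_apply, star_trivial] using this
      rw [h2]
    · rw [if_neg (Ne.symm h), if_neg h]
  have hmvV : ∀ (x : Fin (kbar + 1) × Fin ny → ℝ) (k : Fin (kbar + 1)) (j : Fin ny),
      (Vbar *ᵥ x) (k, j) =
        ((kbar : ℝ) + 1) * ((Vt k) *ᵥ (fun j' => x (k, j'))) j := by
    intro x k j
    simp only [mulVec, dotProduct, Fintype.sum_prod_type, hVbar, ite_mul, zero_mul, mul_assoc]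
    rw [Finset.sum_eq_single k (fun b _ hb => by simp [(Ne.symm hb : k ≠ b)])
      (fun h => absurd (Finset.mem_univ k) h)]
    simp [Finset.mul_sum, mul_assoc]
  have hquadV : ∀ x : Fin (kbar + 1) × Fin ny → ℝ,
      x ⬝ᵥ (Vbar *ᵥ x) = ∑ k : Fin (kbar + 1),
        ((kbar : ℝ) + 1) *
          ((fun j => x (k, j)) ⬝ᵥ ((Vt k) *ᵥ (fun j => x (k, j)))) := by
    intro x
    rw [dotProduct]
    rw [Fintype.sum_prod_type]
    refine Finset.sum_congr rfl fun k _ => ?_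
    rw [dotProduct, Finset.mul_sum]
    refine Finset.sum_congr rfl fun j _ => ?_
    rw [hmvV]
    ring
  have hVbarPD : Vbar.PosDef := by
    refine PosDef.of_dotProduct_mulVec_pos ?_ fun x hx => ?_
    · rwa [IsHermitian, conjTranspose_eq_transpose_of_trivial]
    · rw [star_trivial, hquadV]
      obtain ⟨⟨k0, j0⟩, hx0⟩ := Function.ne_iff.mp hx
      refine Finset.sum_pos' (fun k _ => ?_) ⟨k0, Finset.mem_univ _, ?_⟩
      · have := (hVt k).posSemidef.dotProduct_mulVec_nonneg (fun j => x (k, j))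
        rw [star_trivial] at this
        positivity
      · have hne : (fun j => x (k0, j)) ≠ 0 := by
          intro h
          exact hx0 (congrFun h j0)
        have := (hVt k0).dotProduct_mulVec_pos hne
        rw [star_trivial] at this
        positivity
  -- explicit inverse of Vbar
  set W : Matrix (Fin (kbar + 1) × Fin ny) (Fin (kbar + 1) × Fin ny) ℝ :=
    fun p q => if p.1 = q.1 then (((kbar : ℝ) + 1))⁻¹ * (Vt p.1)⁻¹ p.2 q.2 else 0 with hW
  have hVW : Vbar * W = 1 := by
    ext ⟨k, j⟩ ⟨k'', j''⟩
    rw [mul_apply]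
    rw [Fintype.sum_prod_type]
    simp only [hVbar, hW, ite_mul, zero_mul]
    rw [Finset.sum_eq_single k (fun b _ hb => by simp [(Ne.symm hb : k ≠ b)])
      (fun h => absurd (Finset.mem_univ k) h)]
    simp only [eq_self_iff_true, if_true]
    rcases eq_or_ne k k'' with h | h
    · subst h
      simp only [eq_self_iff_true, if_true]
      have hstep : ∑ j' : Fin ny, ((kbar : ℝ) + 1) * Vt k j j' *
          ((((kbar : ℝ) + 1))⁻¹ * (Vt k)⁻¹ j' j'') =
          ∑ j' : Fin ny, Vt k j j' * (Vt k)⁻¹ j' j'' := by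
        refine Finset.sum_congr rfl fun j' _ => ?_
        field_simp
      rw [hstep, ← mul_apply, Matrix.mul_nonsing_inv _ (hVtdet k), one_apply, one_apply]
      simp [Prod.ext_iff]
    · simp only [mul_ite, if_neg h, mul_zero, Finset.sum_const_zero]
      rw [one_apply]
      simp [Prod.ext_iff, h]
  have hVinv : Vbar⁻¹ = W := Matrix.inv_eq_right_inv hVW
  -- the residual vector
  set e : Fin (kbar + 1) × Fin ny → ℝ := Obar *ᵥ ξ - ψbar with he
  have hek : ∀ k : Fin (kbar + 1), (fun j => e (k, j)) =
      (C * (Φ⁻¹) ^ (kbar - (k : ℕ))) *ᵥ ξ - ψ k := by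
    intro k
    funext j
    simp only [he, Pi.sub_apply, mulVec, dotProduct, hψbar]
    congr 1
    exact Finset.sum_congr rfl fun i _ => by rw [hObar]
  have hmvW : ∀ k j, (W *ᵥ e) (k, j) =
      (((kbar : ℝ) + 1))⁻¹ * ((Vt k)⁻¹ *ᵥ (fun j' => e (k, j'))) j := by
    intro k j
    simp only [mulVec, dotProduct, Fintype.sum_prod_type, hW, ite_mul, zero_mul, mul_assoc]
    rw [Finset.sum_eq_single k (fun b _ hb => by simp [(Ne.symm hb : k ≠ b)])
      (fun h => absurd (Finset.mem_univ k) h)]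
    simp [Finset.mul_sum, mul_assoc]
  have heW : e ⬝ᵥ (W *ᵥ e) ≤ 1 := by
    have hsum : e ⬝ᵥ (W *ᵥ e) = ∑ k : Fin (kbar + 1),
        (((kbar : ℝ) + 1))⁻¹ *
          ((fun j => e (k, j)) ⬝ᵥ ((Vt k)⁻¹ *ᵥ (fun j => e (k, j)))) := by
      rw [dotProduct, Fintype.sum_prod_type]
      refine Finset.sum_congr rfl fun k _ => ?_
      rw [dotProduct, Finset.mul_sum]
      refine Finset.sum_congr rfl fun j _ => ?_
      rw [hmvW]
      ring
    rw [hsum]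
    have hbound : ∀ k : Fin (kbar + 1),
        (((kbar : ℝ) + 1))⁻¹ *
          ((fun j => e (k, j)) ⬝ᵥ ((Vt k)⁻¹ *ᵥ (fun j => e (k, j)))) ≤
          (((kbar : ℝ) + 1))⁻¹ := by
      intro k
      have h1 := hξ k
      rw [← hek k] at h1
      calc (((kbar : ℝ) + 1))⁻¹ *
          ((fun j => e (k, j)) ⬝ᵥ ((Vt k)⁻¹ *ᵥ (fun j => e (k, j))))
          ≤ (((kbar : ℝ) + 1))⁻¹ * 1 := by
            apply mul_le_mul_of_nonneg_left h1 (by positivity)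
        _ = (((kbar : ℝ) + 1))⁻¹ := mul_one _
    calc (∑ k : Fin (kbar + 1), (((kbar : ℝ) + 1))⁻¹ *
          ((fun j => e (k, j)) ⬝ᵥ ((Vt k)⁻¹ *ᵥ (fun j => e (k, j)))))
        ≤ ∑ _k : Fin (kbar + 1), (((kbar : ℝ) + 1))⁻¹ :=
          Finset.sum_le_sum fun k _ => hbound k
      _ = 1 := by
          rw [Finset.sum_const, Finset.card_univ, Fintype.card_fin, nsmul_eq_mul]
          push_cast
          field_simp
  -- M is positive definite
  have hMPD : (Odag * Vbar * Odagᵀ).PosDef := by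
    refine PosDef.of_dotProduct_mulVec_pos ?_ fun x hx => ?_
    · rw [IsHermitian, conjTranspose_eq_transpose_of_trivial, transpose_mul, transpose_mul,
        transpose_transpose, hVbarSymm, ← Matrix.mul_assoc]
    · have key : star x ⬝ᵥ ((Odag * Vbar * Odagᵀ) *ᵥ x) =
          (Odagᵀ *ᵥ x) ⬝ᵥ (Vbar *ᵥ (Odagᵀ *ᵥ x)) := by
        rw [star_trivial, mulVec_mulVec, dot_mv, transpose_transpose, ← Matrix.mul_assoc]
      rw [key]
      have hz : Odagᵀ *ᵥ x ≠ 0 := by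
        intro h
        apply hx
        have h2 : Obarᵀ *ᵥ (Odagᵀ *ᵥ x) = 0 := by rw [h, mulVec_zero]
        rw [mulVec_mulVec, ← transpose_mul, hAO, transpose_one, one_mulVec] at h2
        exact h2
      have hpos := hVbarPD.dotProduct_mulVec_pos hz
      rwa [star_trivial] at hpos
  -- the projection identity
  have hproj : ξ - Odag *ᵥ ψbar = Odag *ᵥ e := by
    rw [he, mulVec_sub, mulVec_mulVec, hAO, one_mulVec]
  rw [hproj]
  calc (Odag *ᵥ e) ⬝ᵥ ((Odag * Vbar * Odagᵀ)⁻¹ *ᵥ (Odag *ᵥ e))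
      ≤ e ⬝ᵥ (Vbar⁻¹ *ᵥ e) := proj_mahalanobis_le Vbar hVbarPD Odag hMPD e
    _ = e ⬝ᵥ (W *ᵥ e) := by rw [hVinv]
    _ ≤ 1 := heW
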